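/- The generating function F(u,v,x) of rooted plane trees with some marked corners incident to inner nodes, such that every node of arity 1 has at least one marked corner (u marking leaves, v marking marked corners, x marking edges), satisfies F = u + x(1+v)²F/(1 − x(1+v)F) − xF. -/

import Mathlib

open MvPolynomial

/-- Rooted plane trees with marked corners: a node carries its list of
children and a list of booleans of length (arity + 1) indicating which of its
corners are marked. -/
inductive PTree where
  | node : List PTree → List Bool → PTree

namespace PTree

/-- Number of edges. -/
def edges : PTree → ℕ
  | .node cs _ => cs.length + (cs.attach.map (fun c => edges c.1)).sum
decreasing_by
  have := List.sizeOf_lt_of_mem c.2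
  simp only [PTree.node.sizeOf_spec]; omega

/-- Number of leaves (a single vertex counts as a leaf). -/
def leaves : PTree → ℕ
  | .node cs _ =>
      if cs.isEmpty then 1 else (cs.attach.map (fun c => leaves c.1)).sum
decreasing_by
  have := List.sizeOf_lt_of_mem c.2
  simp only [PTree.node.sizeOf_spec]; omega

/-- Number of marked corners. -/
def markCount : PTree → ℕ
  | .node cs m => m.count true + (cs.attach.map (fun c => markCount c.1)).sum
decreasing_by
  have := List.sizeOf_lt_of_mem c.2
  simp only [PTree.node.sizeOf_spec]; omega

end PTree

/-- Validity for the class `𝓕`: the marks list has length arity + 1, leaves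
carry no marks, and each node of arity 1 has at least one of its two corners
marked (nodes of arity ≥ 2 may have any subset of their corners marked). -/
inductive Valid9 : PTree → Prop
  | node (cs : List PTree) (m : List Bool) :
      m.length = cs.length + 1 →
      (cs = [] → m.count true = 0) →
      (cs.length = 1 → 1 ≤ m.count true) →
      (∀ c ∈ cs, Valid9 c) →
      Valid9 (.node cs m)

/-- `F(u,v,x)`: the generating function of the class, where `u = X 0` marks
leaves, `v = X 1` marks marked corners, and `x` (the power series variable)
marks edges. -/
noncomputable def Fgf : PowerSeries (MvPolynomial (Fin 2) ℚ) :=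
  PowerSeries.mk (fun e =>
    ∑ᶠ T : {T : PTree // Valid9 T ∧ T.edges = e},
      (X 0) ^ T.1.leaves * (X 1) ^ T.1.markCount)

local notation "u" => (PowerSeries.C : MvPolynomial (Fin 2) ℚ →+* PowerSeries (MvPolynomial (Fin 2) ℚ)) (X 0)
local notation "v" => (PowerSeries.C : MvPolynomial (Fin 2) ℚ →+* PowerSeries (MvPolynomial (Fin 2) ℚ)) (X 1)
local notation "x" => (PowerSeries.X : PowerSeries (MvPolynomial (Fin 2) ℚ))

namespace PTree

theorem edges_node (cs : List PTree) (m : List Bool) :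
    (PTree.node cs m).edges = cs.length + (cs.map PTree.edges).sum := by
  rw [PTree.edges, List.attach_map_val]

theorem leaves_node_nil (m : List Bool) : (PTree.node [] m).leaves = 1 := by
  rw [PTree.leaves]; simp

theorem leaves_node (cs : List PTree) (m : List Bool) (h : cs ≠ []) :
    (PTree.node cs m).leaves = (cs.map PTree.leaves).sum := by
  rw [PTree.leaves, List.attach_map_val]; simp [h]

theorem mark_node (cs : List PTree) (m : List Bool) :
    (PTree.node cs m).markCount = m.count true + (cs.map PTree.markCount).sum := by
  rw [PTree.markCount, List.attach_map_val]

end PTree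

/-- The monomial attached to a tree. -/
noncomputable def monoW (T : PTree) : MvPolynomial (Fin 2) ℚ :=
  (X 0) ^ T.leaves * (X 1) ^ T.markCount

/-- Half-validity: nonempty list of children, correct mark-list length,
valid children, but no condition on the root marks. -/
def HalfP (T : PTree) : Prop :=
  ∃ cs m, T = PTree.node cs m ∧ cs ≠ [] ∧ m.length = cs.length + 1 ∧ ∀ c ∈ cs, Valid9 c

/-- Skeleton condition used for finiteness. -/
inductive Sk : PTree → Prop
  | node (cs : List PTree) (m : List Bool) :
      m.length = cs.length + 1 → (∀ c ∈ cs, Sk c) → Sk (.node cs m)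

theorem Valid9.sk {T : PTree} (h : Valid9 T) : Sk T := by
  induction h with
  | node cs m h1 h2 h3 h4 ih => exact Sk.node cs m h1 ih

theorem HalfP.sk {T : PTree} (h : HalfP T) : Sk T := by
  obtain ⟨cs, m, rfl, -, h1, h2⟩ := h
  exact Sk.node cs m h1 fun c hc => (h2 c hc).sk

theorem finite_lists {α : Type*} {s : Set α} (hs : s.Finite) (n : ℕ) :
    {l : List α | (∀ c ∈ l, c ∈ s) ∧ l.length ≤ n}.Finite := by
  induction n with
  | zero =>
    apply Set.Finite.subset (Set.finite_singleton ([] : List α))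
    rintro l ⟨-, hl⟩
    simpa using List.length_eq_zero_iff.mp (Nat.le_zero.mp hl)
  | succ n ih =>
    apply Set.Finite.subset
      (Set.Finite.insert [] (((hs.prod ih).image (fun p : α × List α => p.1 :: p.2))))
    rintro l ⟨h1, h2⟩
    match l with
    | [] => exact Set.mem_insert _ _
    | a :: l =>
      refine Set.mem_insert_of_mem _ ⟨(a, l), ⟨h1 a (by simp), ?_, ?_⟩, rfl⟩
      · exact fun c hc => h1 c (by simp [hc])
      · simpa using Nat.succ_le_succ_iff.mp h2

theorem finite_sk (e : ℕ) : {T : PTree | Sk T ∧ T.edges ≤ e}.Finite := by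
  induction e with
  | zero =>
    apply Set.Finite.subset
      (Set.Finite.insert (PTree.node [] [false]) (Set.finite_singleton (PTree.node [] [true])))
    rintro T ⟨hs, he⟩
    cases hs with
    | node cs m h1 h2 =>
      rw [PTree.edges_node] at he
      have hcs : cs = [] := List.length_eq_zero_iff.mp (by omega)
      subst hcs
      simp only [List.length_nil] at h1
      match m with
      | [b] => cases b <;> simp
  | succ e ih =>
    have hB : {m : List Bool | m.length ≤ e + 2}.Finite := List.finite_length_le Bool (e + 2)
    have hA := finite_lists ih (e + 1)
    apply Set.Finite.subset (((hA.prod hB).image (fun p => PTree.node p.1 p.2)))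
    rintro T ⟨hs, he⟩
    cases hs with
    | node cs m h1 h2 =>
      rw [PTree.edges_node] at he
      refine ⟨(cs, m), ⟨⟨fun c hc => ⟨h2 c hc, ?_⟩, ?_⟩, ?_⟩, rfl⟩
      · have h3 : c.edges ≤ (cs.map PTree.edges).sum :=
          List.le_sum_of_mem (List.mem_map_of_mem (f := PTree.edges) hc)
        have h4 : 1 ≤ cs.length := List.length_pos_iff.mpr (by rintro rfl; simp at hc)
        omega
      · show cs.length ≤ e + 1
        omega
      · show m.length ≤ e + 2
        omega

/-- Valid trees with `e` edges. -/
def Vset (e : ℕ) : Set PTree := {T | Valid9 T ∧ T.edges = e}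

/-- Half-valid trees with `e` edges. -/
def Hset (e : ℕ) : Set PTree := {T | HalfP T ∧ T.edges = e}

theorem finV (e : ℕ) : (Vset e).Finite :=
  (finite_sk e).subset fun T ⟨h1, h2⟩ => ⟨h1.sk, h2.le⟩

theorem finH (e : ℕ) : (Hset e).Finite :=
  (finite_sk e).subset fun T ⟨h1, h2⟩ => ⟨h1.sk, h2.le⟩

noncomputable def cV (e : ℕ) : MvPolynomial (Fin 2) ℚ := ∑ T ∈ (finV e).toFinset, monoW T
noncomputable def cH (e : ℕ) : MvPolynomial (Fin 2) ℚ := ∑ T ∈ (finH e).toFinset, monoW T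

noncomputable def Hgf : PowerSeries (MvPolynomial (Fin 2) ℚ) := PowerSeries.mk cH

theorem coeff_Fgf (e : ℕ) : PowerSeries.coeff e Fgf = cV e := by
  have h := finsum_set_coe_eq_finsum_mem (f := fun T : PTree => monoW T) (s := Vset e)
  rw [Fgf, PowerSeries.coeff_mk, cV, ← finsum_mem_eq_finite_toFinset_sum _ (finV e), ← h]
  rfl

theorem coeff_Hgf (e : ℕ) : PowerSeries.coeff e Hgf = cH e := PowerSeries.coeff_mk e cH

theorem mono_ff (c : PTree) : monoW (PTree.node [c] [false, false]) = monoW c := by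
  unfold monoW
  rw [PTree.leaves_node [c] _ (by simp), PTree.mark_node]
  simp

theorem monoW_leaf : monoW (PTree.node [] [false]) = X 0 := by
  unfold monoW
  rw [PTree.leaves_node_nil, PTree.mark_node]
  simp

theorem cH0 : cH 0 = 0 := by
  have h : (finH 0).toFinset = ∅ := by
    ext T
    simp only [Set.Finite.mem_toFinset, Finset.notMem_empty, iff_false]
    rintro ⟨⟨cs, m, rfl, hne, -, -⟩, he⟩
    rw [PTree.edges_node] at he
    have := List.length_pos_iff.mpr hne
    omega
  rw [cH, h, Finset.sum_empty]

theorem cV0 : cV 0 = X 0 := by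
  have h : (finV 0).toFinset = {PTree.node [] [false]} := by
    ext T
    simp only [Set.Finite.mem_toFinset, Finset.mem_singleton]
    constructor
    · rintro ⟨hv, he⟩
      cases hv with
      | node cs m hm h0 h1 hc =>
        rw [PTree.edges_node] at he
        have hcs : cs = [] := List.length_eq_zero_iff.mp (by omega)
        subst hcs
        simp only [List.length_nil, Nat.zero_add] at hm
        obtain ⟨b, rfl⟩ := List.length_eq_one_iff.mp hm
        have hb := h0 rfl
        cases b
        · rfl
        · simp at hb
    · rintro rfl
      exact ⟨Valid9.node [] [false] (by simp) (by simp) (by simp) (by simp),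
        by rw [PTree.edges_node]; simp⟩
  rw [cV, h, Finset.sum_singleton, monoW_leaf]

theorem claimA (n : ℕ) : cH (n + 1) = cV (n + 1) + cV n := by
  classical
  have hsplit := Finset.sum_filter_add_sum_filter_not (finH (n + 1)).toFinset
    (fun T => Valid9 T) monoW
  have h1 : (finH (n + 1)).toFinset.filter (fun T => Valid9 T) = (finV (n + 1)).toFinset := by
    ext T
    simp only [Finset.mem_filter, Set.Finite.mem_toFinset]
    constructor
    · rintro ⟨⟨-, he⟩, hv⟩
      exact ⟨hv, he⟩
    · rintro ⟨hv, he⟩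
      refine ⟨⟨?_, he⟩, hv⟩
      cases hv with
      | node cs m hm h0 h1' hc =>
        refine ⟨cs, m, rfl, ?_, hm, hc⟩
        rintro rfl
        rw [PTree.edges_node] at he
        simp at he
  have h2 : (finH (n + 1)).toFinset.filter (fun T => ¬ Valid9 T)
      = (finV n).toFinset.image (fun c => PTree.node [c] [false, false]) := by
    ext T
    simp only [Finset.mem_filter, Set.Finite.mem_toFinset, Finset.mem_image]
    constructor
    · rintro ⟨⟨⟨cs, m, rfl, hne, hm, hc⟩, he⟩, hnv⟩
      have hlen : cs.length = 1 ∧ m.count true = 0 := by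
        by_contra hcon
        apply hnv
        refine Valid9.node cs m hm (fun h => absurd h hne) (fun h1' => ?_) hc
        by_contra h2'
        exact hcon ⟨h1', by omega⟩
      obtain ⟨c, rfl⟩ := List.length_eq_one_iff.mp hlen.1
      obtain ⟨b1, b2, rfl⟩ := List.length_eq_two.mp (by simpa using hm)
      have hb : b1 = false ∧ b2 = false := by
        have := hlen.2
        cases b1 <;> cases b2 <;> simp_all [List.count_cons]
      obtain ⟨rfl, rfl⟩ := hb
      refine ⟨c, ⟨hc c (by simp), ?_⟩, rfl⟩
      rw [PTree.edges_node] at he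
      simp at he
      omega
    · rintro ⟨c, ⟨hv, he⟩, rfl⟩
      refine ⟨⟨⟨[c], [false, false], rfl, by simp, by simp, by simpa using hv⟩, ?_⟩, ?_⟩
      · rw [PTree.edges_node]
        simp [he]
        omega
      · intro hv'
        cases hv' with
        | node cs m hm h0 h1' hc => simp at h1'
  have hinj : ∀ a ∈ (finV n).toFinset, ∀ b ∈ (finV n).toFinset,
      PTree.node [a] [false, false] = PTree.node [b] [false, false] → a = b := by
    intro a _ b _ h
    injection h with h1 h2
    simpa using h1
  calc cH (n + 1) = _ := by rw [cH, ← hsplit]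
  _ = cV (n + 1) + cV n := by
      rw [h1, h2, Finset.sum_image hinj, ← cV]
      congr 1
      rw [cV]
      exact Finset.sum_congr rfl fun c _ => mono_ff c

theorem HgfA : Hgf = Fgf - u + x * Fgf := by
  ext e : 1
  rw [map_add, map_sub, coeff_Hgf, coeff_Fgf, PowerSeries.coeff_C]
  cases e with
  | zero =>
    simp [cH0, cV0, PowerSeries.coeff_zero_eq_constantCoeff]
  | succ n =>
    rw [PowerSeries.coeff_succ_X_mul, coeff_Fgf, claimA n]
    simp only [Nat.succ_ne_zero, if_false]
    ring

/-- The children of a tree. -/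
def kids : PTree → List PTree
  | .node cs _ => cs

/-- Attach a new first child (and root-corner mark bit). -/
def glue (b : Bool) (c : PTree) : PTree → PTree
  | .node cs m => .node (c :: cs) (b :: m)

/-- Detach the first child and the first mark bit. -/
def part : PTree → Bool × PTree × PTree
  | .node (c :: cs) (b :: m) => (b, c, .node cs m)
  | T => (false, T, T)

theorem part_glue (b : Bool) (c : PTree) (cs : List PTree) (m : List Bool) :
    part (glue b c (.node cs m)) = (b, c, .node cs m) := rfl

theorem part_node (b : Bool) (c : PTree) (cs : List PTree) (m : List Bool) :
    part (PTree.node (c :: cs) (b :: m)) = (b, c, PTree.node cs m) := rfl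

theorem glue_node (b : Bool) (c : PTree) (cs : List PTree) (m : List Bool) :
    glue b c (PTree.node cs m) = PTree.node (c :: cs) (b :: m) := rfl

theorem mono_cons (b : Bool) (c : PTree) (cs : List PTree) (m : List Bool) (h : cs ≠ []) :
    monoW (PTree.node (c :: cs) (b :: m)) =
      X 1 ^ (cond b 1 0) * monoW c * monoW (PTree.node cs m) := by
  unfold monoW
  rw [PTree.leaves_node _ _ (by simp), PTree.leaves_node _ _ h,
    PTree.mark_node (c :: cs), PTree.mark_node cs]
  cases b <;> simp [List.count_cons, pow_add] <;> ring

theorem mono_pair (b1 b2 : Bool) (c : PTree) :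
    monoW (PTree.node [c] [b1, b2]) =
      X 1 ^ (cond b1 1 0) * X 1 ^ (cond b2 1 0) * monoW c := by
  unfold monoW
  rw [PTree.leaves_node _ _ (by simp), PTree.mark_node]
  cases b1 <;> cases b2 <;> simp [List.count_cons, pow_add] <;> ring

theorem edges_cons (c : PTree) (cs : List PTree) (m m' : List Bool) :
    (PTree.node (c :: cs) m).edges = 1 + c.edges + (PTree.node cs m').edges := by
  rw [PTree.edges_node, PTree.edges_node]
  simp
  omega

theorem edges_pair (c : PTree) (m : List Bool) :
    (PTree.node [c] m).edges = 1 + c.edges := by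
  rw [PTree.edges_node]
  simp

/-- Decomposition of a half-valid tree with root arity `≥ 2`. -/
theorem mem_s_decomp {n : ℕ} {T : PTree}
    (hT : (HalfP T ∧ T.edges = n + 1) ∧ ¬ (kids T).length = 1) :
    ∃ b c cs m, T = PTree.node (c :: cs) (b :: m) ∧ cs ≠ [] ∧ m.length = cs.length + 1 ∧
      Valid9 c ∧ (∀ d ∈ cs, Valid9 d) := by
  obtain ⟨⟨⟨cs, m, rfl, hne, hm, hc⟩, he⟩, hk⟩ := hT
  have hk' : cs.length ≠ 1 := by simpa [kids] using hk
  match cs, m with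
  | c :: cs', b :: m' =>
    have hlen : cs' ≠ [] := by
      rintro rfl
      simp at hk'
    refine ⟨b, c, cs', m', rfl, hlen, by simpa using hm, hc c (by simp),
      fun d hd => hc d (by simp [hd])⟩

theorem claimB (n : ℕ) : cH (n + 1)
    = (1 + X 1) ^ 2 * cV n + (1 + X 1) * ∑ p ∈ Finset.HasAntidiagonal.antidiagonal n, cV p.1 * cH p.2 := by
  classical
  have hsplit := Finset.sum_filter_add_sum_filter_not (finH (n + 1)).toFinset
    (fun T => (kids T).length = 1) monoW
  -- arity-one part
  have h1 : (finH (n + 1)).toFinset.filter (fun T => (kids T).length = 1)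
      = ((Finset.univ : Finset (Bool × Bool)) ×ˢ (finV n).toFinset).image
          (fun q => PTree.node [q.2] [q.1.1, q.1.2]) := by
    ext T
    simp only [Finset.mem_filter, Set.Finite.mem_toFinset, Finset.mem_image, Finset.mem_product,
      Finset.mem_univ, true_and]
    constructor
    · rintro ⟨⟨⟨cs, m, rfl, hne, hm, hc⟩, he⟩, hk⟩
      obtain ⟨c, rfl⟩ := List.length_eq_one_iff.mp (by simpa [kids] using hk)
      obtain ⟨b1, b2, rfl⟩ := List.length_eq_two.mp (by simpa using hm)
      refine ⟨((b1, b2), c), ⟨hc c (by simp), ?_⟩, rfl⟩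
      rw [edges_pair] at he
      show c.edges = n
      omega
    · rintro ⟨⟨⟨b1, b2⟩, c⟩, ⟨⟨hv, he⟩, rfl⟩⟩
      refine ⟨⟨⟨[c], [b1, b2], rfl, by simp, by simp, by simpa using hv⟩, ?_⟩, by simp [kids]⟩
      show (PTree.node [c] [b1, b2]).edges = n + 1
      rw [edges_pair]
      have he' : c.edges = n := he
      omega
  have hinj1 : ∀ a ∈ (Finset.univ : Finset (Bool × Bool)) ×ˢ (finV n).toFinset,
      ∀ b ∈ (Finset.univ : Finset (Bool × Bool)) ×ˢ (finV n).toFinset,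
      (fun q : (Bool × Bool) × PTree => PTree.node [q.2] [q.1.1, q.1.2]) a
        = (fun q : (Bool × Bool) × PTree => PTree.node [q.2] [q.1.1, q.1.2]) b → a = b := by
    rintro ⟨⟨a1, a2⟩, c⟩ - ⟨⟨b1, b2⟩, d⟩ - h
    simp only [PTree.node.injEq, List.cons.injEq, and_true] at h
    aesop
  have hsum1 : ∑ T ∈ (finH (n + 1)).toFinset.filter (fun T => (kids T).length = 1), monoW T
      = (1 + X 1) ^ 2 * cV n := by
    rw [h1, Finset.sum_image hinj1, Finset.sum_product]
    have key : ∀ bb : Bool × Bool, ∑ c ∈ (finV n).toFinset,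
        monoW (PTree.node [c] [bb.1, bb.2])
        = X 1 ^ (cond bb.1 1 0) * X 1 ^ (cond bb.2 1 0) * cV n := by
      intro bb
      rw [Finset.sum_congr rfl fun c _ => mono_pair bb.1 bb.2 c, ← Finset.mul_sum, cV]
    rw [Finset.sum_congr rfl fun bb _ => key bb, Fintype.sum_prod_type]
    simp [Fintype.sum_bool]
    ring
  -- arity-at-least-two part
  have hsum2 : ∑ T ∈ (finH (n + 1)).toFinset.filter (fun T => ¬ (kids T).length = 1), monoW T
      = (1 + X 1) * ∑ p ∈ Finset.HasAntidiagonal.antidiagonal n, cV p.1 * cH p.2 := by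
    rw [Finset.sum_nbij'
      (i := fun T => (⟨((part T).2.1.edges, (part T).2.2.edges), part T⟩ :
        (_ : ℕ × ℕ) × Bool × PTree × PTree))
      (j := fun q => glue q.2.1 q.2.2.1 q.2.2.2)
      (t := (Finset.HasAntidiagonal.antidiagonal n).sigma fun p =>
        (Finset.univ : Finset Bool) ×ˢ (finV p.1).toFinset ×ˢ (finH p.2).toFinset)
      (g := fun q => X 1 ^ (cond q.2.1 1 0) * monoW q.2.2.1 * monoW q.2.2.2)
      ?hi ?hj ?left ?right ?hfg]
    case hi =>
      intro T hT
      simp only [Finset.mem_filter, Set.Finite.mem_toFinset] at hT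
      obtain ⟨b, c, cs, m, rfl, hlen, hm, hcv, hdv⟩ := mem_s_decomp hT
      have he := hT.1.2
      rw [edges_cons c cs _ m] at he
      simp only [part_node, Finset.mem_sigma, Finset.mem_product, Finset.mem_univ, true_and,
        Finset.HasAntidiagonal.mem_antidiagonal, Set.Finite.mem_toFinset]
      refine ⟨by omega, ⟨hcv, rfl⟩, ⟨cs, m, rfl, hlen, hm, hdv⟩, rfl⟩
    case hj =>
      rintro ⟨⟨p1, p2⟩, b, c, R⟩ hq
      simp only [Finset.mem_sigma, Finset.mem_product, Finset.mem_univ, true_and,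
        Finset.HasAntidiagonal.mem_antidiagonal, Set.Finite.mem_toFinset] at hq
      obtain ⟨hp, ⟨hcv, hce⟩, hR⟩ := hq
      obtain ⟨⟨cs, m, rfl, hne, hm, hc⟩, hre⟩ := hR
      simp only [Finset.mem_filter, Set.Finite.mem_toFinset, glue_node]
      refine ⟨⟨⟨c :: cs, b :: m, rfl, by simp, by simpa using hm, ?_⟩, ?_⟩, ?_⟩
      · rintro d hd
        rcases List.mem_cons.mp hd with rfl | hd'
        · exact hcv
        · exact hc d hd'
      · rw [edges_cons c cs _ m, hre, hce]
        omega
      · have := List.length_pos_iff.mpr hne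
        simp only [kids, List.length_cons]
        omega
    case left =>
      intro T hT
      simp only [Finset.mem_filter, Set.Finite.mem_toFinset] at hT
      obtain ⟨b, c, cs, m, rfl, hlen, hm, hcv, hdv⟩ := mem_s_decomp hT
      rfl
    case right =>
      rintro ⟨⟨p1, p2⟩, b, c, R⟩ hq
      simp only [Finset.mem_sigma, Finset.mem_product, Finset.mem_univ, true_and,
        Finset.HasAntidiagonal.mem_antidiagonal, Set.Finite.mem_toFinset] at hq
      obtain ⟨hp, ⟨hcv, hce⟩, hR⟩ := hq
      obtain ⟨⟨cs, m, rfl, hne, hm, hc⟩, hre⟩ := hR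
      subst hce
      subst hre
      rfl
    case hfg =>
      intro T hT
      simp only [Finset.mem_filter, Set.Finite.mem_toFinset] at hT
      obtain ⟨b, c, cs, m, rfl, hlen, hm, hcv, hdv⟩ := mem_s_decomp hT
      simp only [part_node]
      exact mono_cons b c cs m hlen
    -- now evaluate the sigma sum
    rw [Finset.sum_sigma, Finset.mul_sum]
    refine Finset.sum_congr rfl fun p _ => ?_
    rw [Finset.sum_product]
    have hin : ∀ b : Bool, ∑ y ∈ (finV p.1).toFinset ×ˢ (finH p.2).toFinset,
        X 1 ^ (cond b 1 0) * monoW y.1 * monoW y.2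
        = X 1 ^ (cond b 1 0) * (cV p.1 * cH p.2) := by
      intro b
      rw [Finset.sum_product, cV, cH, Finset.sum_mul_sum, Finset.mul_sum]
      refine Finset.sum_congr rfl fun a _ => ?_
      rw [Finset.mul_sum]
      exact Finset.sum_congr rfl fun b' _ => by ring
    rw [Finset.sum_congr rfl fun b _ => hin b]
    simp [Fintype.sum_bool]
    ring
  calc cH (n + 1) = _ := by rw [cH, ← hsplit]
  _ = _ := by rw [hsum1, hsum2]

theorem HgfB : Hgf = x * (1 + v) ^ 2 * Fgf + x * (1 + v) * Fgf * Hgf := by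
  have hv2 : ((1 + v) ^ 2 : PowerSeries (MvPolynomial (Fin 2) ℚ))
      = PowerSeries.C ((1 + X 1) ^ 2) := by
    rw [map_pow, map_add, map_one]
  have hv1 : ((1 + v) : PowerSeries (MvPolynomial (Fin 2) ℚ))
      = PowerSeries.C (1 + X 1) := by
    rw [map_add, map_one]
  have e1 : x * (1 + v) ^ 2 * Fgf
      = PowerSeries.X * (PowerSeries.C ((1 + X 1) ^ 2) * Fgf) := by
    rw [hv2]; ring
  have e2 : x * (1 + v) * Fgf * Hgf
      = PowerSeries.X * (PowerSeries.C (1 + X 1) * (Fgf * Hgf)) := by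
    rw [hv1]; ring
  ext e : 1
  rw [map_add, coeff_Hgf, e1, e2]
  cases e with
  | zero =>
    rw [cH0]
    simp [PowerSeries.coeff_zero_eq_constantCoeff]
  | succ n =>
    rw [PowerSeries.coeff_succ_X_mul, PowerSeries.coeff_succ_X_mul,
      PowerSeries.coeff_C_mul, PowerSeries.coeff_C_mul, coeff_Fgf, PowerSeries.coeff_mul]
    rw [Finset.sum_congr rfl fun p _ => by rw [coeff_Fgf, coeff_Hgf]]
    exact claimB n

/-- `F = u + x(1+v)²F/(1 − x(1+v)F) − xF`, stated in the equivalent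
multiplied form (the denominator has constant term 1, hence is invertible). -/
theorem Fgf_eq :
    (1 - x * (1 + v) * Fgf) * Fgf
      = (1 - x * (1 + v) * Fgf) * (u - x * Fgf) + x * (1 + v) ^ 2 * Fgf := by
  have hA := HgfA
  have hB := HgfB
  linear_combination (x * (1 + v) * Fgf - 1) * hA + hB
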